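/- Let f : ℝⁿ → (−∞,+∞] be lsc, convex, and absolutely symmetric, let X ∈ M_{m,n} with (f∘σ)(X) finite and ∂f(σ(X)) ≠ ∅. Then for every H ∈ M_{m,n}, the subderivative chain rule d(f∘σ)(X)(H) = df(σ(X))(σ'(X;H)) holds, where σ'(X;H) ∈ ℝⁿ is the directional derivative of the singular value map. -/

import Mathlib

open Filter Topology Matrix

noncomputable section

abbrev Mat (m n : ℕ) := Matrix (Fin m) (Fin n) ℝ

namespace Paper

/-- Frobenius (trace) inner product on real matrices. -/
def finner {m n : ℕ} (X Y : Mat m n) : ℝ := ∑ i, ∑ j, X i j * Y i j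

/-- Frobenius norm. -/
def fnorm {m n : ℕ} (X : Mat m n) : ℝ := Real.sqrt (finner X X)

/-- Euclidean inner product on `ℝⁿ`. -/
def vinner {n : ℕ} (x y : Fin n → ℝ) : ℝ := ∑ i, x i * y i

/-- Euclidean norm on `ℝⁿ`. -/
def vnorm {n : ℕ} (x : Fin n → ℝ) : ℝ := Real.sqrt (vinner x x)

/-- Eigenvalues of a real symmetric matrix, arranged in nonincreasing order. -/
def eigs {k : ℕ} (A : Matrix (Fin k) (Fin k) ℝ) (hA : A.IsHermitian) : Fin k → ℝ :=
  fun i => hA.eigenvalues (Tuple.sort (fun j => -(hA.eigenvalues j)) i)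

/-- Singular values of a real `m × n` matrix, arranged in nonincreasing order. -/
def svals {m n : ℕ} (X : Mat m n) : Fin n → ℝ :=
  fun i => Real.sqrt (eigs (Xᵀ * X) (by simpa [Matrix.conjTranspose_eq_transpose_of_trivial] using Matrix.isHermitian_conjTranspose_mul_self X) i)

/-- The `m × n` matrix with `x` on the diagonal and zeros elsewhere. -/
def mdiag {m n : ℕ} (x : Fin n → ℝ) : Mat m n :=
  fun i j => if (i : ℕ) = (j : ℕ) then x j else 0

/-- The symmetric block matrix `B(X) = [[0, X], [Xᵀ, 0]]`, reindexed over `Fin (m+n)`. -/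
def bmat {m n : ℕ} (X : Mat m n) : Matrix (Fin (m + n)) (Fin (m + n)) ℝ :=
  Matrix.reindex finSumFinEquiv finSumFinEquiv (Matrix.fromBlocks 0 X Xᵀ 0)

lemma bmat_isHermitian {m n : ℕ} (X : Mat m n) : (bmat X).IsHermitian := by
  rw [Matrix.IsHermitian]
  ext i j
  simp only [bmat, Matrix.conjTranspose_apply, Matrix.reindex_apply, Matrix.submatrix_apply,
    star_trivial]
  rcases hi : finSumFinEquiv.symm i with a | a <;> rcases hj : finSumFinEquiv.symm j with b | b <;>
    simp [Matrix.fromBlocks, Matrix.transpose_apply]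

/-- Eigenvalues of `B(X)` in nonincreasing order. -/
def beigs {m n : ℕ} (X : Mat m n) : Fin (m + n) → ℝ :=
  eigs (bmat X) (bmat_isHermitian X)

/-- `Q` is a signed permutation matrix. -/
def IsSignedPerm {n : ℕ} (Q : Matrix (Fin n) (Fin n) ℝ) : Prop :=
  ∃ (e : Equiv.Perm (Fin n)) (s : Fin n → ℝ), (∀ i, s i = 1 ∨ s i = -1) ∧
    ∀ i j, Q i j = if j = e i then s i else 0

/-- A set of vectors invariant under all signed permutations. -/
def AbsSymSet {n : ℕ} (K : Set (Fin n → ℝ)) : Prop :=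
  ∀ Q, IsSignedPerm Q → ∀ x ∈ K, Q.mulVec x ∈ K

/-- An extended-real-valued absolutely symmetric function. -/
def AbsSymFun {n : ℕ} (f : (Fin n → ℝ) → EReal) : Prop :=
  ∀ Q, IsSignedPerm Q → ∀ x, f (Q.mulVec x) = f x

/-- Euclidean distance from a point to a set in `ℝⁿ`. -/
def vdist {n : ℕ} (x : Fin n → ℝ) (K : Set (Fin n → ℝ)) : ℝ :=
  sInf ((fun y => vnorm (x - y)) '' K)

/-- Frobenius distance from a matrix to a set of matrices. -/
def mdist {m n : ℕ} (X : Mat m n) (Γ : Set (Mat m n)) : ℝ :=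
  sInf ((fun Y => fnorm (X - Y)) '' Γ)

section Variational

variable {E : Type*} [AddCommGroup E] [Module ℝ E] [TopologicalSpace E]

/-- The subderivative `dg(x)(w) = liminf_{t↓0, w'→w} (g(x+tw') - g(x))/t`. -/
def subderiv (g : E → EReal) (x w : E) : EReal :=
  liminf (fun p : ℝ × E => ((p.1⁻¹ : ℝ) : EReal) * (g (x + p.1 • p.2) - g x))
    ((𝓝[>] (0 : ℝ)) ×ˢ 𝓝 w)

/-- The second-order difference quotient `Δ²_τ g(x | v)(w)`. -/
def secondQuot (ip : E → E → ℝ) (g : E → EReal) (x v : E) (τ : ℝ) (w : E) : EReal :=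
  ((2 / τ ^ 2 : ℝ) : EReal) * (g (x + τ • w) - g x - ((τ * ip v w : ℝ) : EReal))

/-- The second subderivative `d²g(x | v)(w)`. -/
def secondSubderiv (ip : E → E → ℝ) (g : E → EReal) (x v w : E) : EReal :=
  liminf (fun p : ℝ × E => secondQuot ip g x v p.1 p.2) ((𝓝[>] (0 : ℝ)) ×ˢ 𝓝 w)

/-- The parabolic difference quotient `Δ²_τ g(x)(w | z)`. -/
def parabQuot (g : E → EReal) (x w : E) (τ : ℝ) (z : E) : EReal :=
  ((2 / τ ^ 2 : ℝ) : EReal) *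
    (g (x + τ • w + (τ ^ 2 / 2) • z) - g x - ((τ : ℝ) : EReal) * subderiv g x w)

/-- The parabolic subderivative `d²g(x)(w | z)`. -/
def parabolicSubderiv (g : E → EReal) (x w z : E) : EReal :=
  liminf (fun p : ℝ × E => parabQuot g x w p.1 p.2) ((𝓝[>] (0 : ℝ)) ×ˢ 𝓝 z)

/-- Parabolic epi-differentiability of `g` at `x` for `w`. -/
def ParabEpiDiffAt (g : E → EReal) (x w : E) : Prop :=
  (∃ z, parabolicSubderiv g x w z < ⊤) ∧
  ∀ z : E, ∀ t : ℕ → ℝ, (∀ k, 0 < t k) → Tendsto t atTop (𝓝 0) →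
    ∃ zk : ℕ → E, Tendsto zk atTop (𝓝 z) ∧
      Tendsto (fun k => parabQuot g x w (t k) (zk k)) atTop (𝓝 (parabolicSubderiv g x w z))

/-- The (contingent) tangent cone to `C` at `x`. -/
def tangentConeOf (C : Set E) (x : E) : Set E :=
  {w | ∃ t : ℕ → ℝ, ∃ w' : ℕ → E, (∀ k, 0 < t k) ∧ Tendsto t atTop (𝓝 0) ∧
    Tendsto w' atTop (𝓝 w) ∧ ∀ k, x + t k • w' k ∈ C}

/-- The second-order tangent set to `C` at `x` for `w`. -/
def tangentCone2Of (C : Set E) (x w : E) : Set E :=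
  {u | ∃ t : ℕ → ℝ, ∃ u' : ℕ → E, (∀ k, 0 < t k) ∧ Tendsto t atTop (𝓝 0) ∧
    Tendsto u' atTop (𝓝 u) ∧ ∀ k, x + t k • w + (t k ^ 2 / 2) • u' k ∈ C}

/-- Parabolic derivability of the set `C` at `x` for `w`. -/
def ParabolicallyDerivable (C : Set E) (x w : E) : Prop :=
  (tangentCone2Of C x w).Nonempty ∧
  ∀ u ∈ tangentCone2Of C x w, ∃ ε > (0 : ℝ), ∃ ξ : ℝ → E,
    (∀ t ∈ Set.Icc (0 : ℝ) ε, ξ t ∈ C) ∧ ξ 0 = x ∧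
    Tendsto (fun t : ℝ => t⁻¹ • (ξ t - x)) (𝓝[>] 0) (𝓝 w) ∧
    Tendsto (fun t : ℝ => (2 / t ^ 2) • (ξ t - x - t • w)) (𝓝[>] 0) (𝓝 u)

/-- The convex subdifferential of `g` at `x` (w.r.t. the pairing `ip`). -/
def convSubdiff (ip : E → E → ℝ) (g : E → EReal) (x : E) : Set E :=
  {v | ∀ y, ((ip v (y - x) : ℝ) : EReal) + g x ≤ g y}

/-- Convexity for extended-real-valued functions. -/
def ConvexEReal (g : E → EReal) : Prop :=
  ∀ x y : E, ∀ t : ℝ, 0 ≤ t → t ≤ 1 →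
    g (t • x + (1 - t) • y) ≤ ((t : ℝ) : EReal) * g x + ((1 - t : ℝ) : EReal) * g y

end Variational

/-- Local Lipschitz continuity of `f` relative to its domain (everywhere on the domain). -/
def LocLipRelDom {n : ℕ} (f : (Fin n → ℝ) → EReal) : Prop :=
  ∀ x, f x ≠ ⊤ → ∃ l ≥ (0 : ℝ), ∃ U ∈ 𝓝 x, ∀ y ∈ U, ∀ z ∈ U, f y ≠ ⊤ → f z ≠ ⊤ →
    |(f y).toReal - (f z).toReal| ≤ l * vnorm (y - z)

/-- The columns of `U` with indices `r, r+1, …, k-1`. -/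
def colsFrom {k : ℕ} (r : ℕ) (U : Matrix (Fin k) (Fin k) ℝ) :
    Matrix (Fin k) (Fin (k - r)) ℝ :=
  fun i j => U i ⟨r + (j : ℕ), by have := j.isLt; omega⟩

/-- The first `r` columns of `U`. -/
def firstCols {k : ℕ} (r : ℕ) (h : r ≤ k) (U : Matrix (Fin k) (Fin k) ℝ) :
    Matrix (Fin k) (Fin r) ℝ :=
  fun i j => U i (Fin.castLE h j)

/-- The submatrix of `M` with rows `a ≤ · < b` and columns `c ≤ · < d`. -/
def subBlock {p q : ℕ} (M : Matrix (Fin p) (Fin q) ℝ) (a b c d : ℕ)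
    (h1 : b ≤ p) (h2 : d ≤ q) : Matrix (Fin (b - a)) (Fin (d - c)) ℝ :=
  fun i j => M ⟨a + (i : ℕ), by have := i.isLt; omega⟩ ⟨c + (j : ℕ), by have := j.isLt; omega⟩

/-- Nuclear norm: the sum of all singular values. -/
def nucNorm {m n : ℕ} (A : Mat m n) : ℝ := ∑ j, svals A j

/-- `Ψₙ(X) = σ_{r+1}(X) + ⋯ + σ_n(X)`, the sum of the `n - r` smallest singular values. -/
def psiN {m n : ℕ} (r : ℕ) (X : Mat m n) : ℝ :=
  ∑ s : Fin n, if r ≤ (s : ℕ) then svals X s else 0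

/-- The regular (Fréchet) subdifferential of a real-valued function on matrices. -/
def regSubdiff {m n : ℕ} (g : Mat m n → ℝ) (X : Mat m n) : Set (Mat m n) :=
  {V | ∀ ε > (0 : ℝ), ∀ᶠ Y in 𝓝 X, g X + finner V (Y - X) - ε * fnorm (Y - X) ≤ g Y}

/-- Two square matrices admit a simultaneous ordered spectral decomposition. -/
def SimSpec {k : ℕ} (A B : Matrix (Fin k) (Fin k) ℝ) : Prop :=
  ∃ (W : Matrix (Fin k) (Fin k) ℝ) (a b : Fin k → ℝ), Wᵀ * W = 1 ∧
    Antitone a ∧ Antitone b ∧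
    A = W * Matrix.diagonal a * Wᵀ ∧ B = W * Matrix.diagonal b * Wᵀ

/-- Two rectangular matrices admit a simultaneous ordered singular value decomposition. -/
def SimSVD {p q : ℕ} (A B : Matrix (Fin p) (Fin q) ℝ) : Prop :=
  ∃ (U : Matrix (Fin p) (Fin p) ℝ) (V : Matrix (Fin q) (Fin q) ℝ)
    (a b : Fin q → ℝ), Uᵀ * U = 1 ∧ Vᵀ * V = 1 ∧
    Antitone a ∧ Antitone b ∧ (∀ j, 0 ≤ a j) ∧ (∀ j, 0 ≤ b j) ∧
    A = U * (mdiag a : Mat p q) * Vᵀ ∧ B = U * (mdiag b : Mat p q) * Vᵀ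

end Paper

open Paper

namespace Chain
open Paper

variable {k m n : ℕ}

lemma vinner_eq_dot (x y : Fin k → ℝ) : vinner x y = x ⬝ᵥ y := rfl

lemma vnorm_eq_norm (x : Fin k → ℝ) :
    vnorm x = ‖(WithLp.equiv 2 ((i : Fin k) → ℝ)).symm x‖ := by
  rw [EuclideanSpace.norm_eq, vnorm, vinner]
  congr 1
  refine Finset.sum_congr rfl fun i _ => ?_
  simp [WithLp.equiv_symm_apply, PiLp.toLp_apply, sq, Real.norm_eq_abs, abs_mul_abs_self]

lemma vnorm_nonneg (x : Fin k → ℝ) : 0 ≤ vnorm x := Real.sqrt_nonneg _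

lemma vinner_self_nonneg (x : Fin k → ℝ) : 0 ≤ vinner x x :=
  Finset.sum_nonneg fun i _ => mul_self_nonneg _

lemma sq_vnorm (x : Fin k → ℝ) : vnorm x ^ 2 = vinner x x := by
  rw [vnorm, Real.sq_sqrt (vinner_self_nonneg x)]

lemma vnorm_add_le (x y : Fin k → ℝ) : vnorm (x + y) ≤ vnorm x + vnorm y := by
  rw [vnorm_eq_norm, vnorm_eq_norm, vnorm_eq_norm]
  exact norm_add_le _ _

lemma abs_le_vnorm (x : Fin k → ℝ) (i : Fin k) : |x i| ≤ vnorm x := by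
  rw [vnorm, vinner, ← Real.sqrt_mul_self (abs_nonneg (x i)), abs_mul_abs_self]
  exact Real.sqrt_le_sqrt (Finset.single_le_sum (f := fun j => x j * x j)
    (fun j _ => mul_self_nonneg _) (Finset.mem_univ i))

lemma fnorm_nonneg (X : Mat m n) : 0 ≤ fnorm X := Real.sqrt_nonneg _

lemma finner_self_nonneg (X : Mat m n) : 0 ≤ finner X X :=
  Finset.sum_nonneg fun i _ => Finset.sum_nonneg fun j _ => mul_self_nonneg _

lemma sq_fnorm (X : Mat m n) : fnorm X ^ 2 = finner X X := by
  rw [fnorm, Real.sq_sqrt (finner_self_nonneg X)]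

lemma abs_le_fnorm (X : Mat m n) (i : Fin m) (j : Fin n) : |X i j| ≤ fnorm X := by
  rw [fnorm, ← Real.sqrt_sq_eq_abs]
  apply Real.sqrt_le_sqrt
  rw [finner, sq]
  have h1 : X i j * X i j ≤ ∑ j', X i j' * X i j' :=
    Finset.single_le_sum (f := fun j' => X i j' * X i j')
      (fun l _ => mul_self_nonneg _) (Finset.mem_univ j)
  exact h1.trans (Finset.single_le_sum (f := fun i' => ∑ j', X i' j' * X i' j')
    (fun l _ => Finset.sum_nonneg fun _ _ => mul_self_nonneg _) (Finset.mem_univ i))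

lemma fnorm_smul (t : ℝ) (X : Mat m n) : fnorm (t • X) = |t| * fnorm X := by
  rw [fnorm, fnorm, finner, finner]
  have : ∑ i, ∑ j, (t • X) i j * (t • X) i j = t ^ 2 * ∑ i, ∑ j, X i j * X i j := by
    rw [Finset.mul_sum]
    refine Finset.sum_congr rfl fun i _ => ?_
    rw [Finset.mul_sum]
    refine Finset.sum_congr rfl fun j _ => ?_
    simp [Matrix.smul_apply]; ring
  rw [this, Real.sqrt_mul (sq_nonneg t), Real.sqrt_sq_eq_abs]

lemma finner_eq_trace (X Y : Mat m n) : finner X Y = Matrix.trace (X * Yᵀ) := by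
  rw [Matrix.trace, finner]
  refine Finset.sum_congr rfl fun i _ => ?_
  simp [Matrix.mul_apply, Matrix.diag]

lemma fnorm_conj {U : Matrix (Fin m) (Fin m) ℝ} {V : Matrix (Fin n) (Fin n) ℝ}
    (hU : Uᵀ * U = 1) (hV : Vᵀ * V = 1) (A : Mat m n) :
    fnorm (U * A * Vᵀ) = fnorm A := by
  rw [fnorm, fnorm, finner_eq_trace, finner_eq_trace]
  have h1 : (U * A * Vᵀ) * (U * A * Vᵀ)ᵀ = U * (A * (Aᵀ * Uᵀ)) := by
    simp only [Matrix.transpose_mul, Matrix.transpose_transpose, Matrix.mul_assoc]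
    rw [← Matrix.mul_assoc Vᵀ V, hV, Matrix.one_mul]
  rw [h1, Matrix.trace_mul_comm]
  simp only [Matrix.mul_assoc]
  rw [hU, Matrix.mul_one]

lemma fnorm_mdiag (hmn : n ≤ m) (z : Fin n → ℝ) : fnorm (mdiag z : Mat m n) = vnorm z := by
  rw [fnorm, vnorm, finner, vinner]
  congr 1
  rw [Finset.sum_comm]
  refine Finset.sum_congr rfl fun j _ => ?_
  rw [← Finset.sum_subset (Finset.subset_univ {⟨(j : ℕ), lt_of_lt_of_le j.isLt hmn⟩})]
  · simp [mdiag]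
  · intro i _ hi
    simp only [Finset.mem_singleton] at hi
    have : (i : ℕ) ≠ (j : ℕ) := by
      intro h
      exact hi (Fin.ext h)
    simp [mdiag, this]

lemma vnorm_mulVec_le (M : Mat m n) (x : Fin n → ℝ) :
    vnorm (M *ᵥ x) ≤ fnorm M * vnorm x := by
  have h0 : 0 ≤ fnorm M * vnorm x := mul_nonneg (fnorm_nonneg M) (vnorm_nonneg x)
  rw [vnorm, ← Real.sqrt_sq h0]
  apply Real.sqrt_le_sqrt
  have hsq : (fnorm M * vnorm x) ^ 2 = finner M M * vinner x x := by
    rw [mul_pow, sq_fnorm, sq_vnorm]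
  rw [hsq, vinner, finner, Finset.sum_mul]
  refine Finset.sum_le_sum fun i _ => ?_
  calc (M *ᵥ x) i * (M *ᵥ x) i = (∑ j, M i j * x j) ^ 2 := by
        rw [sq]; rfl
    _ ≤ (∑ j, M i j ^ 2) * ∑ j, x j ^ 2 :=
        Finset.sum_mul_sq_le_sq_mul_sq Finset.univ (fun j => M i j) x
    _ = (∑ j, M i j * M i j) * ∑ j, x j * x j := by simp [sq]

section Spectral
variable {k m n : ℕ}

lemma conjT (A : Mat m n) : Aᴴ = Aᵀ := by
  ext i j; simp [Matrix.conjTranspose_apply]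

lemma eigs_antitone {A : Matrix (Fin k) (Fin k) ℝ} (hA : A.IsHermitian) :
    Antitone (eigs A hA) := by
  intro i j hij
  have := Tuple.monotone_sort (fun j => -(hA.eigenvalues j)) hij
  simp only [Function.comp_apply, neg_le_neg_iff] at this
  exact this

lemma conj_diag_apply {W : Matrix (Fin k) (Fin k) ℝ} (d : Fin k → ℝ) (i j : Fin k) :
    (W * Matrix.diagonal d * Wᵀ) i j = ∑ l, d l * (W i l * W j l) := by
  rw [Matrix.mul_apply]
  simp only [Matrix.mul_diagonal, Matrix.transpose_apply]
  exact Finset.sum_congr rfl fun l _ => by ring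

lemma unsortedSpec {A : Matrix (Fin k) (Fin k) ℝ} (hA : A.IsHermitian) :
    ∃ U : Matrix (Fin k) (Fin k) ℝ, Uᵀ * U = 1 ∧
      A = U * Matrix.diagonal hA.eigenvalues * Uᵀ := by
  refine ⟨(hA.eigenvectorUnitary : Matrix (Fin k) (Fin k) ℝ), ?_, ?_⟩
  · have := Matrix.mem_unitaryGroup_iff'.mp hA.eigenvectorUnitary.2
    rwa [Matrix.star_eq_conjTranspose, conjT] at this
  · have hspec := hA.spectral_theorem
    rw [Unitary.conjStarAlgAut_apply, RCLike.ofReal_real_eq_id, Matrix.star_eq_conjTranspose, conjT] at hspec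
    simpa using hspec

lemma sortedSpec {A : Matrix (Fin k) (Fin k) ℝ} (hA : A.IsHermitian) :
    ∃ W : Matrix (Fin k) (Fin k) ℝ, Wᵀ * W = 1 ∧
      A = W * Matrix.diagonal (eigs A hA) * Wᵀ := by
  obtain ⟨U, hU, hUspec⟩ := unsortedSpec hA
  set p := Tuple.sort (fun j => -(hA.eigenvalues j)) with hp
  refine ⟨U.submatrix id p, ?_, ?_⟩
  · ext l l'
    have h1 : (Uᵀ * U) (p l) (p l') = (1 : Matrix (Fin k) (Fin k) ℝ) (p l) (p l') := by
      rw [hU]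
    simp only [Matrix.mul_apply, Matrix.transpose_apply, Matrix.one_apply] at h1 ⊢
    simp only [Matrix.submatrix_apply, id_eq]
    rw [h1]
    by_cases h : l = l'
    · simp [h]
    · have : p l ≠ p l' := fun hc => h (p.injective hc)
      simp [h, this]
  · ext i j
    rw [conj_diag_apply]
    have h2 : A i j = ∑ l, hA.eigenvalues l * (U i l * U j l) := by
      conv_lhs => rw [hUspec]
      exact conj_diag_apply hA.eigenvalues i j
    rw [h2, ← Equiv.sum_comp p (fun l => hA.eigenvalues l * (U i l * U j l))]
    refine Finset.sum_congr rfl fun l _ => ?_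
    simp [eigs, Matrix.submatrix_apply, hp]

lemma antitone_multiset_eq {d e : Fin k → ℝ} (hd : Antitone d) (he : Antitone e)
    (h : Multiset.map d Finset.univ.val = Multiset.map e Finset.univ.val) : d = e := by
  have hcoe : ∀ f : Fin k → ℝ, Multiset.map f Finset.univ.val = ↑(List.ofFn f) := by
    intro f
    rw [List.ofFn_eq_map]
    have : (Finset.univ : Finset (Fin k)).val = ↑(List.finRange k) := rfl
    rw [this, Multiset.map_coe]
  rw [hcoe, hcoe, Multiset.coe_eq_coe] at h
  have hsd : (List.ofFn d).Pairwise (· ≥ ·) := by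
    rw [List.pairwise_ofFn]
    intro i j hij
    exact hd hij.le
  have hse : (List.ofFn e).Pairwise (· ≥ ·) := by
    rw [List.pairwise_ofFn]
    intro i j hij
    exact he hij.le
  have : IsAntisymm ℝ (· ≥ ·) := ⟨fun a b h1 h2 => le_antisymm h2 h1⟩
  exact List.ofFn_inj.mp (List.Perm.eq_of_pairwise (fun a b _ _ h1 h2 => le_antisymm h2 h1) hsd hse h)

lemma det_conj_diag {W : Matrix (Fin k) (Fin k) ℝ} (hW : Wᵀ * W = 1) (d : Fin k → ℝ)
    (x : ℝ) :
    Matrix.det (x • (1 : Matrix (Fin k) (Fin k) ℝ) - W * Matrix.diagonal d * Wᵀ)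
      = ∏ i, (x - d i) := by
  have hW' : W * Wᵀ = 1 := mul_eq_one_comm.mp hW
  have h1 : x • (1 : Matrix (Fin k) (Fin k) ℝ) - W * Matrix.diagonal d * Wᵀ
      = W * (Matrix.diagonal (fun i => x - d i)) * Wᵀ := by
    have hx : x • (1 : Matrix (Fin k) (Fin k) ℝ) = W * (x • 1) * Wᵀ := by
      rw [Matrix.mul_smul, Matrix.mul_one, Matrix.smul_mul, hW']
    rw [hx, ← Matrix.sub_mul, ← Matrix.mul_sub]
    congr 2
    ext i j
    by_cases h : i = j <;> simp [Matrix.diagonal, h, Matrix.one_apply]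
  have h2 : Wᵀ.det * W.det = 1 := by rw [← Matrix.det_mul, hW, Matrix.det_one]
  rw [h1, Matrix.det_mul, Matrix.det_mul]
  calc W.det * (Matrix.diagonal fun i => x - d i).det * Wᵀ.det
      = (Matrix.diagonal fun i => x - d i).det * (Wᵀ.det * W.det) := by ring
    _ = (Matrix.diagonal fun i => x - d i).det := by rw [h2, mul_one]
    _ = ∏ i, (x - d i) := Matrix.det_diagonal

lemma eigs_unique {A : Matrix (Fin k) (Fin k) ℝ} (hA : A.IsHermitian)
    {W : Matrix (Fin k) (Fin k) ℝ} {d : Fin k → ℝ} (hW : Wᵀ * W = 1) (hd : Antitone d)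
    (hdec : A = W * Matrix.diagonal d * Wᵀ) : eigs A hA = d := by
  obtain ⟨W₀, hW₀, hdec₀⟩ := sortedSpec hA
  have heval : ∀ x : ℝ, ∏ i, (x - eigs A hA i) = ∏ i, (x - d i) := by
    intro x
    rw [← det_conj_diag hW₀ _ x, ← det_conj_diag hW d x, ← hdec₀, ← hdec]
  have hQ : ∀ (f : Fin k → ℝ) (x : ℝ),
      Polynomial.eval x ((Multiset.map f Finset.univ.val).map
        (fun a => Polynomial.X - Polynomial.C a)).prod = ∏ i, (x - f i) := by
    intro f x
    rw [Polynomial.eval_multiset_prod, Multiset.map_map, Multiset.map_map]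
    simp only [Function.comp_def, Polynomial.eval_sub, Polynomial.eval_X, Polynomial.eval_C]
    exact (Finset.prod_eq_multiset_prod _ _).symm
  have hpoly : ((Multiset.map (eigs A hA) Finset.univ.val).map
        (fun a => Polynomial.X - Polynomial.C a)).prod
      = ((Multiset.map d Finset.univ.val).map
        (fun a => Polynomial.X - Polynomial.C a)).prod := by
    apply Polynomial.funext
    intro x
    rw [hQ, hQ, heval]
  have hroots : Multiset.map (eigs A hA) Finset.univ.val = Multiset.map d Finset.univ.val := by
    rw [← Polynomial.roots_multiset_prod_X_sub_C (Multiset.map (eigs A hA) Finset.univ.val),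
      ← Polynomial.roots_multiset_prod_X_sub_C (Multiset.map d Finset.univ.val), hpoly]
  exact antitone_multiset_eq (eigs_antitone hA) hd hroots

end Spectral
section Weyl
variable {k m n : ℕ}

lemma quad_eq {W : Matrix (Fin k) (Fin k) ℝ} (hW : Wᵀ * W = 1) {d : Fin k → ℝ}
    {A : Matrix (Fin k) (Fin k) ℝ} (hdec : A = W * Matrix.diagonal d * Wᵀ) (x : Fin k → ℝ) :
    x ⬝ᵥ (A *ᵥ x) = ∑ i, d i * ((Wᵀ *ᵥ x) i * (Wᵀ *ᵥ x) i) := by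
  set y := Wᵀ *ᵥ x with hy
  have h1 : A *ᵥ x = W *ᵥ (Matrix.diagonal d *ᵥ y) := by
    rw [hdec, ← Matrix.mulVec_mulVec, ← Matrix.mulVec_mulVec]
  rw [h1, Matrix.dotProduct_mulVec, ← Matrix.mulVec_transpose]
  rw [dotProduct, Finset.sum_congr rfl]
  intro i _
  rw [← hy, Matrix.mulVec_diagonal]
  ring

lemma dot_self_eq {W : Matrix (Fin k) (Fin k) ℝ} (hW : Wᵀ * W = 1) (x : Fin k → ℝ) :
    x ⬝ᵥ x = (Wᵀ *ᵥ x) ⬝ᵥ (Wᵀ *ᵥ x) := by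
  have hW' : W * Wᵀ = 1 := mul_eq_one_comm.mp hW
  conv_lhs => rw [show x = W *ᵥ (Wᵀ *ᵥ x) by rw [Matrix.mulVec_mulVec, hW', Matrix.one_mulVec]]
  rw [Matrix.dotProduct_mulVec, ← Matrix.mulVec_transpose]
  congr 1
  rw [Matrix.mulVec_mulVec, hW, Matrix.one_mulVec]

lemma quad_le {W : Matrix (Fin k) (Fin k) ℝ} (hW : Wᵀ * W = 1) {d : Fin k → ℝ}
    (hd : Antitone d) {A : Matrix (Fin k) (Fin k) ℝ}
    (hdec : A = W * Matrix.diagonal d * Wᵀ) {x : Fin k → ℝ} {s : Fin k}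
    (h0 : ∀ i, i < s → (Wᵀ *ᵥ x) i = 0) : x ⬝ᵥ (A *ᵥ x) ≤ d s * (x ⬝ᵥ x) := by
  rw [quad_eq hW hdec, dot_self_eq hW x, dotProduct, Finset.mul_sum]
  refine Finset.sum_le_sum fun i _ => ?_
  by_cases h : i < s
  · rw [h0 i h]; simp
  · exact mul_le_mul_of_nonneg_right (hd (not_lt.mp h)) (mul_self_nonneg _)

lemma quad_ge {W : Matrix (Fin k) (Fin k) ℝ} (hW : Wᵀ * W = 1) {d : Fin k → ℝ}
    (hd : Antitone d) {A : Matrix (Fin k) (Fin k) ℝ}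
    (hdec : A = W * Matrix.diagonal d * Wᵀ) {x : Fin k → ℝ} {s : Fin k}
    (h0 : ∀ i, s < i → (Wᵀ *ᵥ x) i = 0) : d s * (x ⬝ᵥ x) ≤ x ⬝ᵥ (A *ᵥ x) := by
  rw [quad_eq hW hdec, dot_self_eq hW x, dotProduct, Finset.mul_sum]
  refine Finset.sum_le_sum fun i _ => ?_
  by_cases h : s < i
  · rw [h0 i h]; simp
  · exact mul_le_mul_of_nonneg_right (hd (not_lt.mp h)) (mul_self_nonneg _)

lemma svals_eq (A : Mat m n) (s : Fin n) :
    svals A s = Real.sqrt (eigs (Aᴴ * A) (Matrix.isHermitian_conjTranspose_mul_self A) s) := rfl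

lemma eigs_tt_nonneg (A : Mat m n) (s : Fin n) :
    0 ≤ eigs (Aᴴ * A) (Matrix.isHermitian_conjTranspose_mul_self A) s :=
  (Matrix.posSemidef_conjTranspose_mul_self A).eigenvalues_nonneg _

lemma sq_svals (A : Mat m n) (s : Fin n) :
    svals A s ^ 2 = eigs (Aᴴ * A) (Matrix.isHermitian_conjTranspose_mul_self A) s := by
  rw [svals_eq, Real.sq_sqrt (eigs_tt_nonneg A s)]

lemma svals_nonneg (A : Mat m n) (s : Fin n) : 0 ≤ svals A s := Real.sqrt_nonneg _

lemma dot_tt (A : Mat m n) (x : Fin n → ℝ) :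
    x ⬝ᵥ ((Aᴴ * A) *ᵥ x) = (A *ᵥ x) ⬝ᵥ (A *ᵥ x) := by
  rw [conjT, ← Matrix.mulVec_mulVec, Matrix.dotProduct_mulVec, ← Matrix.mulVec_transpose,
    Matrix.transpose_transpose]

lemma vnorm_eq_sqrt_dot (x : Fin k → ℝ) : vnorm x = Real.sqrt (x ⬝ᵥ x) := rfl

lemma vnorm_pos {x : Fin k → ℝ} (hx : x ≠ 0) : 0 < vnorm x := by
  obtain ⟨i, hi⟩ := Function.ne_iff.mp hx
  have h1 : 0 < x i * x i := mul_self_pos.mpr hi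
  have h2 : x i * x i ≤ x ⬝ᵥ x :=
    Finset.single_le_sum (f := fun j => x j * x j) (fun j _ => mul_self_nonneg _)
      (Finset.mem_univ i)
  exact Real.sqrt_pos.mpr (lt_of_lt_of_le h1 h2)

lemma svals_le_add (A B : Mat m n) (s : Fin n) :
    svals B s ≤ svals A s + fnorm (B - A) := by
  classical
  set hA := Matrix.isHermitian_conjTranspose_mul_self A with hAdef
  set hB := Matrix.isHermitian_conjTranspose_mul_self B with hBdef
  obtain ⟨WA, hWA, hdA⟩ := sortedSpec hA
  obtain ⟨WB, hWB, hdB⟩ := sortedSpec hB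
  -- find a common nonzero vector
  have hn : 0 < n := s.pos
  let F : (Fin n → ℝ) →ₗ[ℝ] ({ i : Fin n // i ≠ s } → ℝ) :=
    { toFun := fun x i => if (i : Fin n) < s then (WAᵀ *ᵥ x) (i : Fin n)
        else (WBᵀ *ᵥ x) (i : Fin n)
      map_add' := by
        intro u v; funext i
        by_cases h : (i : Fin n) < s <;> simp [h, Matrix.mulVec_add]
      map_smul' := by
        intro c v; funext i
        by_cases h : (i : Fin n) < s <;> simp [h, Matrix.mulVec_smul] }
  have hcard : Fintype.card { i : Fin n // i ≠ s } < n := by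
    have h1 : Fintype.card { i : Fin n // i ≠ s } = n - 1 := by
      have := Fintype.card_subtype_compl (fun i : Fin n => i = s)
      rw [Fintype.card_subtype_eq, Fintype.card_fin] at this
      exact this
    omega
  have hker : LinearMap.ker F ≠ ⊥ := by
    apply LinearMap.ker_ne_bot_of_finrank_lt
    rw [Module.finrank_pi, Module.finrank_pi, Fintype.card_fin]
    exact hcard
  obtain ⟨x, hxker, hx0⟩ := (Submodule.ne_bot_iff _).mp hker
  have hxk : ∀ i : { i : Fin n // i ≠ s }, F x i = 0 := by
    intro i; rw [hxker]; rfl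
  have hA0 : ∀ i, i < s → (WAᵀ *ᵥ x) i = 0 := by
    intro i hi
    have := hxk ⟨i, ne_of_lt hi⟩
    simpa [F, hi] using this
  have hB0 : ∀ i, s < i → (WBᵀ *ᵥ x) i = 0 := by
    intro i hi
    have := hxk ⟨i, ne_of_gt hi⟩
    simpa [F, not_lt.mpr hi.le, asymm hi] using this
  -- norm inequalities
  have hup : vnorm (A *ᵥ x) ≤ svals A s * vnorm x := by
    have h1 : x ⬝ᵥ ((Aᴴ * A) *ᵥ x) ≤ svals A s ^ 2 * (x ⬝ᵥ x) := by
      rw [sq_svals]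
      exact quad_le hWA (eigs_antitone hA) hdA hA0
    rw [vnorm_eq_sqrt_dot, vnorm_eq_sqrt_dot, ← dot_tt]
    calc Real.sqrt (x ⬝ᵥ ((Aᴴ * A) *ᵥ x)) ≤ Real.sqrt (svals A s ^ 2 * (x ⬝ᵥ x)) :=
          Real.sqrt_le_sqrt h1
      _ = svals A s * Real.sqrt (x ⬝ᵥ x) := by
          rw [Real.sqrt_mul (sq_nonneg _), Real.sqrt_sq (svals_nonneg A s)]
  have hlo : svals B s * vnorm x ≤ vnorm (B *ᵥ x) := by
    have h1 : svals B s ^ 2 * (x ⬝ᵥ x) ≤ x ⬝ᵥ ((Bᴴ * B) *ᵥ x) := by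
      rw [sq_svals]
      exact quad_ge hWB (eigs_antitone hB) hdB hB0
    rw [vnorm_eq_sqrt_dot, vnorm_eq_sqrt_dot, ← dot_tt]
    calc svals B s * Real.sqrt (x ⬝ᵥ x) = Real.sqrt (svals B s ^ 2 * (x ⬝ᵥ x)) := by
          rw [Real.sqrt_mul (sq_nonneg _), Real.sqrt_sq (svals_nonneg B s)]
      _ ≤ Real.sqrt (x ⬝ᵥ ((Bᴴ * B) *ᵥ x)) := Real.sqrt_le_sqrt h1
  have htri : vnorm (B *ᵥ x) ≤ vnorm (A *ᵥ x) + vnorm ((B - A) *ᵥ x) := by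
    have h1 : B *ᵥ x = A *ᵥ x + (B - A) *ᵥ x := by
      rw [Matrix.sub_mulVec]; abel
    rw [h1]; exact vnorm_add_le _ _
  have hcs : vnorm ((B - A) *ᵥ x) ≤ fnorm (B - A) * vnorm x := vnorm_mulVec_le _ _
  have hfin : svals B s * vnorm x ≤ (svals A s + fnorm (B - A)) * vnorm x := by
    calc svals B s * vnorm x ≤ vnorm (B *ᵥ x) := hlo
      _ ≤ vnorm (A *ᵥ x) + vnorm ((B - A) *ᵥ x) := htri
      _ ≤ svals A s * vnorm x + fnorm (B - A) * vnorm x := add_le_add hup hcs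
      _ = (svals A s + fnorm (B - A)) * vnorm x := by ring
  exact le_of_mul_le_mul_right hfin (vnorm_pos hx0)

lemma fnorm_neg_sub (A B : Mat m n) : fnorm (B - A) = fnorm (A - B) := by
  have h : B - A = (-1 : ℝ) • (A - B) := by
    rw [neg_one_smul]; exact (neg_sub A B).symm
  rw [h, fnorm_smul]; norm_num

lemma svals_lipschitz (A B : Mat m n) (s : Fin n) :
    |svals A s - svals B s| ≤ fnorm (A - B) := by
  rw [abs_le]
  constructor
  · have := svals_le_add A B s
    rw [fnorm_neg_sub] at this
    linarith
  · have := svals_le_add B A s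
    linarith

end Weyl
section SVD
variable {m n : ℕ}

/-- The permutation sorting `|y|` in nonincreasing order. -/
def sortPermAbs (y : Fin n → ℝ) : Equiv.Perm (Fin n) := Tuple.sort (fun j => -|y j|)

/-- `|y|` arranged in nonincreasing order. -/
def sortedAbs (y : Fin n → ℝ) : Fin n → ℝ := fun i => |y (sortPermAbs y i)|

lemma sortedAbs_antitone (y : Fin n → ℝ) : Antitone (sortedAbs y) := by
  intro i j hij
  have := Tuple.monotone_sort (fun j => -|y j|) hij
  simp only [Function.comp_apply, neg_le_neg_iff] at this
  exact this

lemma sortedAbs_nonneg (y : Fin n → ℝ) (i : Fin n) : 0 ≤ sortedAbs y i := abs_nonneg _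

/-- Conjugating a diagonal matrix by a permutation. -/
lemma perm_conj_diag (d : Fin n → ℝ) (e : Equiv.Perm (Fin n)) :
    ∃ P : Matrix (Fin n) (Fin n) ℝ, Pᵀ * P = 1 ∧
      Matrix.diagonal d = P * Matrix.diagonal (fun i => d (e i)) * Pᵀ := by
  classical
  refine ⟨Matrix.of fun i j => if e j = i then 1 else 0, ?_, ?_⟩
  · ext l l'
    simp only [Matrix.mul_apply, Matrix.transpose_apply, Matrix.one_apply, Matrix.of_apply]
    rw [Finset.sum_eq_single (e l)]
    · by_cases h : l = l'
      · simp [h]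
      · have : e l ≠ e l' := fun hc => h (e.injective hc)
        simp [h, this.symm]
    · intro b _ hb; simp [Ne.symm hb]
    · simp
  · ext i j
    rw [conj_diag_apply]
    rw [Finset.sum_eq_single (e.symm i)]
    · by_cases h : i = j
      · simp [← h, Matrix.diagonal]
      · have h2 : e (e.symm i) ≠ j := by
          rw [Equiv.apply_symm_apply]; exact h
        simp [Matrix.diagonal, h, h2]
    · intro b _ hb
      have : e b ≠ i := fun hc => hb (by rw [← hc, Equiv.symm_apply_apply])
      simp [this]
    · simp

lemma mdiagT_mdiag (hmn : n ≤ m) (y z : Fin n → ℝ) :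
    (mdiag y : Mat m n)ᵀ * (mdiag z : Mat m n) = Matrix.diagonal (fun j => y j * z j) := by
  ext j j'
  simp only [Matrix.mul_apply, Matrix.transpose_apply, mdiag]
  rw [Finset.sum_eq_single (⟨(j : ℕ), lt_of_lt_of_le j.isLt hmn⟩ : Fin m)]
  · by_cases h : j = j'
    · simp [← h, Matrix.diagonal]
    · have : (j : ℕ) ≠ (j' : ℕ) := fun hc => h (Fin.ext hc)
      simp [Matrix.diagonal, h, this]
  · intro i _ hi
    have : (i : ℕ) ≠ (j : ℕ) := fun hc => hi (Fin.ext hc)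
    simp [this]
  · simp

lemma svals_conj (hmn : n ≤ m) {U : Matrix (Fin m) (Fin m) ℝ} {V : Matrix (Fin n) (Fin n) ℝ}
    (hU : Uᵀ * U = 1) (hV : Vᵀ * V = 1) (y : Fin n → ℝ) :
    svals (U * (mdiag y : Mat m n) * Vᵀ) = sortedAbs y := by
  set M : Mat m n := U * (mdiag y : Mat m n) * Vᵀ with hM
  set e := sortPermAbs y with he
  have hMM : Mᴴ * M = V * Matrix.diagonal (fun j => y j * y j) * Vᵀ := by
    rw [conjT, hM]
    have h1 : (U * (mdiag y : Mat m n) * Vᵀ)ᵀ = V * ((mdiag y : Mat m n)ᵀ * Uᵀ) := by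
      rw [Matrix.transpose_mul, Matrix.transpose_mul, Matrix.transpose_transpose]
    rw [h1]
    calc V * ((mdiag y : Mat m n)ᵀ * Uᵀ) * (U * (mdiag y : Mat m n) * Vᵀ)
        = V * ((mdiag y : Mat m n)ᵀ * ((Uᵀ * U) * (mdiag y : Mat m n))) * Vᵀ := by
          simp only [Matrix.mul_assoc]
      _ = V * ((mdiag y : Mat m n)ᵀ * (mdiag y : Mat m n)) * Vᵀ := by
          rw [hU, Matrix.one_mul]
      _ = V * Matrix.diagonal (fun j => y j * y j) * Vᵀ := by rw [mdiagT_mdiag hmn]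
  obtain ⟨P, hP, hPd⟩ := perm_conj_diag (fun j => y j * y j) e
  have hW : (V * P)ᵀ * (V * P) = 1 := by
    rw [Matrix.transpose_mul]
    calc Pᵀ * Vᵀ * (V * P) = Pᵀ * ((Vᵀ * V) * P) := by simp only [Matrix.mul_assoc]
      _ = 1 := by rw [hV, Matrix.one_mul, hP]
  have hdec : Mᴴ * M = (V * P) * Matrix.diagonal (fun i => y (e i) * y (e i)) * (V * P)ᵀ := by
    rw [hMM, hPd]
    simp only [Matrix.transpose_mul, Matrix.mul_assoc]
  have hanti : Antitone (fun i => y (e i) * y (e i)) := by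
    intro i j hij
    have h1 := sortedAbs_antitone y hij
    have h2 : ∀ i, y (e i) * y (e i) = sortedAbs y i * sortedAbs y i := by
      intro i; rw [sortedAbs, ← he, ← abs_mul_abs_self]
    show y (e j) * y (e j) ≤ y (e i) * y (e i)
    rw [h2 j, h2 i]
    exact mul_self_le_mul_self (sortedAbs_nonneg y j) h1
  have heigs := eigs_unique (Matrix.isHermitian_conjTranspose_mul_self M) hW hanti hdec
  funext s
  rw [svals_eq, heigs, Real.sqrt_mul_self_eq_abs]
  rfl

lemma exists_signedPerm (y : Fin n → ℝ) :
    ∃ Q : Matrix (Fin n) (Fin n) ℝ, IsSignedPerm Q ∧ Q.mulVec y = sortedAbs y := by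
  classical
  set e := sortPermAbs y with he
  set sg : Fin n → ℝ := fun i => if y (e i) < 0 then -1 else 1 with hsg
  refine ⟨Matrix.of fun i j => if j = e i then sg i else 0, ⟨e, sg, fun i => ?_, fun i j => rfl⟩, ?_⟩
  · by_cases h : y (e i) < 0 <;> simp [hsg, h]
  · funext i
    rw [Matrix.mulVec, dotProduct, Finset.sum_eq_single (e i)]
    · by_cases h : y (e i) < 0
      · simp [hsg, h, sortedAbs, ← he, abs_of_neg h]
      · simp [hsg, h, sortedAbs, ← he, abs_of_nonneg (not_lt.mp h)]
    · intro b _ hb; simp [hb]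
    · simp

lemma dot_move {m n : ℕ} (M : Mat m n) (x : Fin n → ℝ) (z : Fin m → ℝ) :
    x ⬝ᵥ (Mᵀ *ᵥ z) = (M *ᵥ x) ⬝ᵥ z := by
  rw [Matrix.mulVec_transpose, dotProduct_comm x, ← Matrix.dotProduct_mulVec]
  exact dotProduct_comm _ _

lemma dot_self_eq_zero {x : Fin n → ℝ} (h : x ⬝ᵥ x = 0) : x = 0 := by
  by_contra hx
  exact absurd h (ne_of_gt (by
    obtain ⟨i, hi⟩ := Function.ne_iff.mp hx
    exact lt_of_lt_of_le (mul_self_pos.mpr hi)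
      (Finset.single_le_sum (f := fun j => x j * x j) (fun j _ => mul_self_nonneg _)
        (Finset.mem_univ i))))

lemma svd_exists (hmn : n ≤ m) (A : Mat m n) :
    ∃ (U : Matrix (Fin m) (Fin m) ℝ) (V : Matrix (Fin n) (Fin n) ℝ),
      Uᵀ * U = 1 ∧ Vᵀ * V = 1 ∧ A = U * (mdiag (svals A) : Mat m n) * Vᵀ := by
  classical
  set hA := Matrix.isHermitian_conjTranspose_mul_self A with hAdef
  obtain ⟨V, hV, hdV⟩ := sortedSpec hA
  set σ := svals A with hσ
  have hσ2 : ∀ j, eigs (Aᴴ * A) hA j = σ j * σ j := by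
    intro j
    rw [hσ, ← sq_svals, sq]
  set v : Fin n → (Fin n → ℝ) := fun j => fun i => V i j with hv
  have hVcol : ∀ l : Fin n, Vᵀ *ᵥ v l = Pi.single l 1 := by
    intro l
    funext i
    have h1 : (Vᵀ * V) i l = (1 : Matrix (Fin n) (Fin n) ℝ) i l := by rw [hV]
    simp only [Matrix.mul_apply, Matrix.transpose_apply, Matrix.one_apply] at h1
    simp only [Matrix.mulVec, dotProduct, Matrix.transpose_apply, hv]
    rw [h1, Pi.single_apply]
  have hVmul : ∀ l : Fin n, V *ᵥ Pi.single l 1 = v l := by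
    intro l
    funext i
    simp [Matrix.mulVec_single, hv]
  have hAAv : ∀ l : Fin n, (Aᴴ * A) *ᵥ v l = (σ l * σ l) • v l := by
    intro l
    rw [hdV, ← Matrix.mulVec_mulVec, hVcol, ← Matrix.mulVec_mulVec,
      Matrix.diagonal_mulVec_single]
    have h5 : (Pi.single l (eigs (Aᴴ * A) hA l * 1) : Fin n → ℝ)
        = eigs (Aᴴ * A) hA l • (Pi.single l 1 : Fin n → ℝ) := by
      funext i
      by_cases h : i = l <;> simp [Pi.single_apply, h]
    rw [h5, Matrix.mulVec_smul, hVmul, hσ2]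
  have hAvAv : ∀ j l : Fin n, (A *ᵥ v j) ⬝ᵥ (A *ᵥ v l) = if j = l then σ l * σ l else 0 := by
    intro j l
    have h1 : (A *ᵥ v j) ⬝ᵥ (A *ᵥ v l) = v j ⬝ᵥ ((Aᴴ * A) *ᵥ v l) := by
      rw [conjT, ← Matrix.mulVec_mulVec, dot_move]
    rw [h1, hAAv, dotProduct_smul]
    have h2 : v j ⬝ᵥ v l = if j = l then 1 else 0 := by
      have h3 : (Vᵀ * V) j l = (1 : Matrix (Fin n) (Fin n) ℝ) j l := by rw [hV]
      simp only [Matrix.mul_apply, Matrix.transpose_apply, Matrix.one_apply] at h3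
      simp only [dotProduct, hv]
      rw [h3]
    rw [smul_eq_mul, h2]
    by_cases h : j = l <;> simp [h]
  -- the candidate left singular vectors
  set E := (WithLp.equiv 2 (Fin m → ℝ)).symm with hE
  set uvec : Fin n → (Fin m → ℝ) := fun j => (σ j)⁻¹ • (A *ᵥ v j) with huvec
  set S : Set (Fin m) := {i | ∃ h : (i : ℕ) < n, σ ⟨(i : ℕ), h⟩ ≠ 0} with hS
  set w : Fin m → EuclideanSpace ℝ (Fin m) := fun i =>
    if h : (i : ℕ) < n then E (uvec ⟨(i : ℕ), h⟩) else 0 with hw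
  have hinner : ∀ x z : Fin m → ℝ, (inner ℝ (E x) (E z) : ℝ) = x ⬝ᵥ z := by
    intro x z
    simp [PiLp.inner_apply, RCLike.inner_apply, hE, WithLp.equiv_symm_apply, PiLp.toLp_apply,
      dotProduct, mul_comm]
  have horth : Orthonormal ℝ (S.restrict w) := by
    rw [orthonormal_iff_ite]
    rintro ⟨i, hi⟩ ⟨i', hi'⟩
    obtain ⟨h1, h2⟩ := id hi
    obtain ⟨h1', h2'⟩ := id hi'
    simp only [Set.restrict_apply, Set.restrict, hw, dif_pos h1, dif_pos h1']
    rw [hinner]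
    have : uvec ⟨(i : ℕ), h1⟩ ⬝ᵥ uvec ⟨(i' : ℕ), h1'⟩
        = (σ ⟨(i : ℕ), h1⟩)⁻¹ * ((σ ⟨(i' : ℕ), h1'⟩)⁻¹
          * (if (⟨(i : ℕ), h1⟩ : Fin n) = ⟨(i' : ℕ), h1'⟩
            then σ ⟨(i' : ℕ), h1'⟩ * σ ⟨(i' : ℕ), h1'⟩ else 0)) := by
      rw [huvec]
      simp only [smul_dotProduct, dotProduct_smul, smul_eq_mul]
      rw [hAvAv]
      ring
    rw [this]
    by_cases h : (⟨(i : ℕ), h1⟩ : Fin n) = ⟨(i' : ℕ), h1'⟩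
    · have hnat : (i : ℕ) = (i' : ℕ) := Fin.mk.inj h
      have hii : i = i' := Fin.ext hnat
      subst hii
      rw [if_pos rfl, if_pos rfl]
      field_simp
    · have hii : ¬ (⟨i, hi⟩ : S) = ⟨i', hi'⟩ := by
        intro hc
        apply h
        have hval : i = i' := congrArg Subtype.val hc
        exact Fin.ext (show (i : ℕ) = (i' : ℕ) from congrArg Fin.val hval)
      rw [if_neg h, if_neg hii]
      ring
  obtain ⟨b, hb⟩ := horth.exists_orthonormalBasis_extension_of_card_eq
    (by simp [Fintype.card_fin])
  set U : Matrix (Fin m) (Fin m) ℝ := Matrix.of fun i j => (WithLp.equiv 2 (Fin m → ℝ)) (b j) i with hU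
  have hUorth : Uᵀ * U = 1 := by
    ext j j'
    have h1 := (orthonormal_iff_ite.mp b.orthonormal) j j'
    have h2 : (inner ℝ (b j) (b j') : ℝ)
        = (fun i => (WithLp.equiv 2 (Fin m → ℝ)) (b j) i)
          ⬝ᵥ (fun i => (WithLp.equiv 2 (Fin m → ℝ)) (b j') i) := by
      rw [← hinner]
      congr 1 <;> exact ((WithLp.equiv 2 (Fin m → ℝ)).symm_apply_apply _).symm
    rw [h2] at h1
    simp only [Matrix.mul_apply, Matrix.transpose_apply, Matrix.one_apply, hU, Matrix.of_apply]
    rw [show ∑ i, (WithLp.equiv 2 (Fin m → ℝ)) (b j) i * (WithLp.equiv 2 (Fin m → ℝ)) (b j') i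
      = (fun i => (WithLp.equiv 2 (Fin m → ℝ)) (b j) i)
        ⬝ᵥ (fun i => (WithLp.equiv 2 (Fin m → ℝ)) (b j') i) from rfl, h1]
  refine ⟨U, V, hUorth, hV, ?_⟩
  have hVV : V * Vᵀ = 1 := mul_eq_one_comm.mp hV
  have key : A * V = U * (mdiag σ : Mat m n) := by
    ext i j
    have hlt : (j : ℕ) < m := lt_of_lt_of_le j.isLt hmn
    set l₀ : Fin m := ⟨(j : ℕ), hlt⟩ with hl₀
    have hrhs : (U * (mdiag σ : Mat m n)) i j = U i l₀ * σ j := by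
      rw [Matrix.mul_apply, Finset.sum_eq_single l₀]
      · simp [mdiag, hl₀]
      · intro b' _ hb'
        have : (b' : ℕ) ≠ (j : ℕ) := fun hc => hb' (by rw [hl₀]; exact Fin.ext hc)
        simp [mdiag, this]
      · simp
    have hlhs : (A * V) i j = (A *ᵥ v j) i := by
      simp [Matrix.mul_apply, Matrix.mulVec, dotProduct, hv]
    rw [hrhs, hlhs]
    by_cases hzero : σ j = 0
    · have h1 : (A *ᵥ v j) ⬝ᵥ (A *ᵥ v j) = 0 := by rw [hAvAv, if_pos rfl, hzero, mul_zero]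
      have h2 : A *ᵥ v j = 0 := dot_self_eq_zero h1
      rw [h2, hzero, mul_zero]
      rfl
    · have hmem : l₀ ∈ S := by
        refine ⟨by simpa [hl₀] using j.isLt, ?_⟩
        have : (⟨((l₀ : Fin m) : ℕ), by simpa [hl₀] using j.isLt⟩ : Fin n) = j := by
          apply Fin.ext; simp [hl₀]
        rw [this]; exact hzero
      have hbl := hb l₀ hmem
      have hUil : U i l₀ = uvec j i := by
        show (WithLp.equiv 2 (Fin m → ℝ)) (b l₀) i = uvec j i
        rw [hbl]
        simp only [hw]
        have hjn : ((l₀ : Fin m) : ℕ) < n := by simpa [hl₀] using j.isLt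
        rw [dif_pos hjn]
        have : (⟨((l₀ : Fin m) : ℕ), hjn⟩ : Fin n) = j := by apply Fin.ext; simp [hl₀]
        rw [this, hE, Equiv.apply_symm_apply]
      rw [hUil, huvec]
      simp only [Pi.smul_apply, smul_eq_mul]
      field_simp
  calc A = A * (V * Vᵀ) := by rw [hVV, Matrix.mul_one]
    _ = (A * V) * Vᵀ := by rw [Matrix.mul_assoc]
    _ = U * (mdiag σ : Mat m n) * Vᵀ := by rw [key]

end SVD
section Analysis
variable {m n : ℕ}

lemma liminf_map_eq {α β : Type*} (u : β → EReal) (g : α → β) (F : Filter α) :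
    Filter.liminf u (Filter.map g F) = Filter.liminf (u ∘ g) F := by
  show Filter.limsInf (Filter.map u (Filter.map g F)) = Filter.limsInf (Filter.map (u ∘ g) F)
  rw [Filter.map_map]

lemma tendsto_vnorm_zero {α : Type*} {l : Filter α} {F : α → (Fin n → ℝ)}
    (h : ∀ s, Tendsto (fun x => F x s) l (𝓝 0)) :
    Tendsto (fun x => vnorm (F x)) l (𝓝 0) := by
  have h1 : Tendsto (fun x => vinner (F x) (F x)) l (𝓝 0) := by
    have : Tendsto (fun x => ∑ s, F x s * F x s) l (𝓝 (∑ s : Fin n, (0 : ℝ))) := by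
      apply tendsto_finset_sum
      intro s _
      simpa using (h s).mul (h s)
    simpa [vinner] using this
  have h2 := h1.sqrt
  rw [Real.sqrt_zero] at h2
  exact h2

lemma tendsto_fnorm_zero {α : Type*} {l : Filter α} {F : α → Mat m n}
    (h : ∀ i j, Tendsto (fun x => F x i j) l (𝓝 0)) :
    Tendsto (fun x => fnorm (F x)) l (𝓝 0) := by
  have h1 : Tendsto (fun x => finner (F x) (F x)) l (𝓝 0) := by
    have : Tendsto (fun x => ∑ i, ∑ j, F x i j * F x i j) l
        (𝓝 (∑ i : Fin m, ∑ j : Fin n, (0 : ℝ))) := by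
      apply tendsto_finset_sum
      intro i _
      apply tendsto_finset_sum
      intro j _
      simpa using (h i j).mul (h i j)
    simpa [finner] using this
  have h2 := h1.sqrt
  rw [Real.sqrt_zero] at h2
  exact h2

lemma f_sortedAbs {f : (Fin n → ℝ) → EReal} (habs : AbsSymFun f) (z : Fin n → ℝ) :
    f (sortedAbs z) = f z := by
  obtain ⟨Q, hQ, hQz⟩ := exists_signedPerm z
  rw [← hQz]
  exact habs Q hQ z

end Analysis
section MoreHelpers
variable {m n : ℕ}

lemma vnorm_smul (t : ℝ) (z : Fin n → ℝ) : vnorm (t • z) = |t| * vnorm z := by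
  rw [vnorm, vnorm, vinner, vinner]
  have : ∑ i, (t • z) i * (t • z) i = t ^ 2 * ∑ i, z i * z i := by
    rw [Finset.mul_sum]
    refine Finset.sum_congr rfl fun i _ => ?_
    simp [smul_eq_mul]; ring
  rw [this, Real.sqrt_mul (sq_nonneg t), Real.sqrt_sq_eq_abs]

lemma mdiag_sub (y z : Fin n → ℝ) :
    (mdiag y : Mat m n) - mdiag z = mdiag (y - z) := by
  ext i j
  simp only [Matrix.sub_apply, mdiag, Pi.sub_apply]
  split_ifs <;> simp

end MoreHelpers
end Chain

open Chain

/-- Chain rule for subderivatives of orthogonally invariant matrix functions: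
if `f` is lsc, convex and absolutely symmetric with `∂f(σ(X)) ≠ ∅`, then
`d(f∘σ)(X)(H) = df(σ(X))(σ'(X;H))`. -/
theorem stmt7 {m n : ℕ} (hmn : n ≤ m) (f : (Fin n → ℝ) → EReal)
    (habs : AbsSymFun f) (hconv : ConvexEReal f) (hlsc : LowerSemicontinuous f)
    (hbot : ∀ x, f x ≠ ⊥) (X : Mat m n) (hfin : f (svals X) ≠ ⊤)
    (hsub : (convSubdiff vinner f (svals X)).Nonempty)
    (H : Mat m n) (ds : Fin n → ℝ)
    (hds : ∀ s, Tendsto (fun t : ℝ => (svals (X + t • H) s - svals X s) / t)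
      (𝓝[>] (0 : ℝ)) (𝓝 (ds s))) :
    subderiv (fun Z : Mat m n => f (svals Z)) X H = subderiv f (svals X) ds := by
  classical
  set φ : Fin n → ℝ := svals X with hφ
  set c : EReal := f φ with hc
  set F₁ : Filter (ℝ × Mat m n) := (𝓝[>] (0 : ℝ)) ×ˢ 𝓝 H with hF₁
  set F₂ : Filter (ℝ × (Fin n → ℝ)) := (𝓝[>] (0 : ℝ)) ×ˢ 𝓝 ds with hF₂
  set Q₁ : ℝ × Mat m n → EReal :=
    fun p => ((p.1⁻¹ : ℝ) : EReal) * (f (svals (X + p.1 • p.2)) - c) with hQ₁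
  set Q₂ : ℝ × (Fin n → ℝ) → EReal :=
    fun p => ((p.1⁻¹ : ℝ) : EReal) * (f (φ + p.1 • p.2) - c) with hQ₂
  have heps₁ : ∀ᶠ p in F₁, 0 < p.1 :=
    (eventually_mem_nhdsWithin (s := Set.Ioi (0:ℝ))).prod_inl (𝓝 H)
  have heps₂ : ∀ᶠ p in F₂, 0 < p.1 :=
    (eventually_mem_nhdsWithin (s := Set.Ioi (0:ℝ))).prod_inl (𝓝 ds)
  have hds' : ∀ s, Tendsto (fun t : ℝ => t⁻¹ * (svals (X + t • H) s - φ s))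
      (𝓝[>] (0 : ℝ)) (𝓝 (ds s)) := by
    intro s
    have := hds s
    simp only [div_eq_inv_mul] at this
    exact this
  have hLHS : subderiv (fun Z : Mat m n => f (svals Z)) X H = Filter.liminf Q₁ F₁ := rfl
  have hRHS : subderiv f (svals X) ds = Filter.liminf Q₂ F₂ := rfl
  rw [hLHS, hRHS]
  -- ======== Part A : RHS ≤ LHS ========
  have partA : Filter.liminf Q₂ F₂ ≤ Filter.liminf Q₁ F₁ := by
    set ψ : ℝ × Mat m n → ℝ × (Fin n → ℝ) :=
      fun p => (p.1, p.1⁻¹ • (svals (X + p.1 • p.2) - φ)) with hψ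
    have htf : Tendsto (fun p : ℝ × Mat m n => p.1) F₁ (𝓝[>] (0 : ℝ)) := tendsto_fst
    have hsnd : Tendsto (fun p : ℝ × Mat m n => p.1⁻¹ • (svals (X + p.1 • p.2) - φ))
        F₁ (𝓝 ds) := by
      rw [tendsto_pi_nhds]
      intro s
      have ha : Tendsto (fun p : ℝ × Mat m n => p.1⁻¹ * (svals (X + p.1 • H) s - φ s))
          F₁ (𝓝 (ds s)) := (hds' s).comp htf
      have hb : Tendsto (fun p : ℝ × Mat m n =>
          p.1⁻¹ * (svals (X + p.1 • p.2) s - svals (X + p.1 • H) s)) F₁ (𝓝 0) := by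
        apply squeeze_zero_norm' (a := fun p : ℝ × Mat m n => fnorm (p.2 - H))
        · filter_upwards [heps₁] with p hp
          have h1 : |svals (X + p.1 • p.2) s - svals (X + p.1 • H) s|
              ≤ fnorm ((X + p.1 • p.2) - (X + p.1 • H)) := svals_lipschitz _ _ s
          have h2 : (X + p.1 • p.2) - (X + p.1 • H) = p.1 • (p.2 - H) := by
            rw [smul_sub]; abel
          rw [h2, fnorm_smul] at h1
          rw [Real.norm_eq_abs, abs_mul, abs_inv]
          calc |p.1|⁻¹ * |svals (X + p.1 • p.2) s - svals (X + p.1 • H) s|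
              ≤ |p.1|⁻¹ * (|p.1| * fnorm (p.2 - H)) :=
                mul_le_mul_of_nonneg_left h1 (inv_nonneg.mpr (abs_nonneg _))
            _ = fnorm (p.2 - H) := by
                field_simp
        · apply tendsto_fnorm_zero
          intro i j
          have hsnd0 : Tendsto (fun p : ℝ × Mat m n => p.2) F₁ (𝓝 H) := tendsto_snd
          have h3 : Tendsto (fun p : ℝ × Mat m n => p.2 i j) F₁ (𝓝 (H i j)) :=
            tendsto_pi_nhds.mp (tendsto_pi_nhds.mp hsnd0 i) j
          have h4 := h3.sub (tendsto_const_nhds (x := H i j))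
          rw [sub_self] at h4
          exact h4.congr fun p => by simp [Matrix.sub_apply]
      have hab := ha.add hb
      rw [add_zero] at hab
      apply hab.congr
      intro p
      simp only [Pi.smul_apply, Pi.sub_apply, smul_eq_mul]
      ring
    have hψt : Tendsto ψ F₁ F₂ := htf.prodMk hsnd
    have hcong : ∀ᶠ p in F₁, (Q₂ ∘ ψ) p = Q₁ p := by
      filter_upwards [heps₁] with p hp
      have h1 : φ + p.1 • (p.1⁻¹ • (svals (X + p.1 • p.2) - φ)) = svals (X + p.1 • p.2) := by
        rw [smul_smul, mul_inv_cancel₀ (ne_of_gt hp), one_smul]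
        abel
      simp only [Function.comp_apply, hQ₂, hψ, hQ₁]
      rw [h1]
    calc Filter.liminf Q₂ F₂ ≤ Filter.liminf Q₂ (Filter.map ψ F₁) :=
          Filter.liminf_le_liminf_of_le hψt
      _ = Filter.liminf (Q₂ ∘ ψ) F₁ := liminf_map_eq _ _ _
      _ = Filter.liminf Q₁ F₁ := Filter.liminf_congr hcong
  -- ======== Part B : LHS ≤ RHS ========
  have partB : Filter.liminf Q₁ F₁ ≤ Filter.liminf Q₂ F₂ := by
    have hsvd : ∀ t : ℝ, ∃ UV : Matrix (Fin m) (Fin m) ℝ × Matrix (Fin n) (Fin n) ℝ,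
        (UV.1ᵀ * UV.1 = 1) ∧ (UV.2ᵀ * UV.2 = 1) ∧
        X + t • H = UV.1 * (mdiag (svals (X + t • H)) : Mat m n) * UV.2ᵀ := by
      intro t
      obtain ⟨U, V, h1, h2, h3⟩ := svd_exists hmn (X + t • H)
      exact ⟨(U, V), h1, h2, h3⟩
    choose UV hUo hVo hXt using hsvd
    set Y : ℝ × (Fin n → ℝ) → Mat m n :=
      fun p => (UV p.1).1 * (mdiag (φ + p.1 • p.2) : Mat m n) * (UV p.1).2ᵀ with hY
    set χ : ℝ × (Fin n → ℝ) → ℝ × Mat m n :=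
      fun p => (p.1, p.1⁻¹ • (Y p - X)) with hχ
    have htf : Tendsto (fun p : ℝ × (Fin n → ℝ) => p.1) F₂ (𝓝[>] (0 : ℝ)) := tendsto_fst
    -- the key svals computation
    have hsY : ∀ p : ℝ × (Fin n → ℝ), f (svals (Y p)) = f (φ + p.1 • p.2) := by
      intro p
      rw [hY]
      rw [svals_conj hmn (hUo p.1) (hVo p.1) (φ + p.1 • p.2)]
      exact f_sortedAbs habs _
    -- eventual equality of quotients
    have hcong : ∀ᶠ p in F₂, (Q₁ ∘ χ) p = Q₂ p := by
      filter_upwards [heps₂] with p hp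
      have h1 : X + p.1 • (p.1⁻¹ • (Y p - X)) = Y p := by
        rw [smul_smul, mul_inv_cancel₀ (ne_of_gt hp), one_smul]
        abel
      simp only [Function.comp_apply, hQ₁, hχ]
      rw [h1, hsY p, hQ₂]
    -- convergence of χ
    have hgt : Tendsto (fun p : ℝ × (Fin n → ℝ) =>
        vnorm (p.2 - p.1⁻¹ • (svals (X + p.1 • H) - φ))) F₂ (𝓝 0) := by
      apply tendsto_vnorm_zero
      intro s
      have h5 : Tendsto (fun p : ℝ × (Fin n → ℝ) => p.2 s) F₂ (𝓝 (ds s)) :=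
        tendsto_pi_nhds.mp tendsto_snd s
      have h6 : Tendsto (fun p : ℝ × (Fin n → ℝ) =>
          p.1⁻¹ * (svals (X + p.1 • H) s - φ s)) F₂ (𝓝 (ds s)) := (hds' s).comp htf
      have h7 := h5.sub h6
      rw [sub_self] at h7
      exact h7.congr fun p => by
        simp only [Pi.sub_apply, Pi.smul_apply, Pi.sub_apply, smul_eq_mul]
    have hbound : ∀ᶠ p in F₂, ∀ i j, |(p.1⁻¹ • (Y p - X)) i j - H i j|
        ≤ vnorm (p.2 - p.1⁻¹ • (svals (X + p.1 • H) - φ)) := by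
      filter_upwards [heps₂] with p hp i j
      have ht0 : p.1 ≠ 0 := ne_of_gt hp
      have hYX : Y p - (X + p.1 • H)
          = (UV p.1).1 * (mdiag (φ + p.1 • p.2 - svals (X + p.1 • H)) : Mat m n)
            * (UV p.1).2ᵀ := by
        conv_lhs => rw [hY, hXt p.1]
        rw [← mdiag_sub, Matrix.mul_sub, Matrix.sub_mul]
      have hent : (p.1⁻¹ • (Y p - X)) i j - H i j
          = (p.1⁻¹ • (Y p - (X + p.1 • H))) i j := by
        simp only [Matrix.smul_apply, Matrix.sub_apply, Matrix.add_apply, smul_eq_mul]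
        field_simp
        ring
      rw [hent]
      calc |(p.1⁻¹ • (Y p - (X + p.1 • H))) i j|
          ≤ fnorm (p.1⁻¹ • (Y p - (X + p.1 • H))) := abs_le_fnorm _ i j
        _ = |p.1⁻¹| * fnorm (Y p - (X + p.1 • H)) := fnorm_smul _ _
        _ = p.1⁻¹ * vnorm (φ + p.1 • p.2 - svals (X + p.1 • H)) := by
            rw [hYX, fnorm_conj (hUo p.1) (hVo p.1), fnorm_mdiag hmn,
              abs_of_pos (inv_pos.mpr hp)]
        _ = vnorm (p.1⁻¹ • (φ + p.1 • p.2 - svals (X + p.1 • H))) := by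
            rw [vnorm_smul, abs_of_pos (inv_pos.mpr hp)]
        _ = vnorm (p.2 - p.1⁻¹ • (svals (X + p.1 • H) - φ)) := by
            congr 1
            rw [smul_sub, smul_add, smul_smul, inv_mul_cancel₀ ht0, one_smul, smul_sub]
            abel
    have hsnd : Tendsto (fun p : ℝ × (Fin n → ℝ) => p.1⁻¹ • (Y p - X)) F₂ (𝓝 H) := by
      refine tendsto_pi_nhds.mpr ?_
      intro i
      rw [tendsto_pi_nhds]
      intro j
      have hsq : Tendsto (fun p : ℝ × (Fin n → ℝ) =>
          (p.1⁻¹ • (Y p - X)) i j - H i j) F₂ (𝓝 0) := by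
        apply squeeze_zero_norm' ?_ hgt
        filter_upwards [hbound] with p hp
        rw [Real.norm_eq_abs]
        exact hp i j
      have := hsq.add (tendsto_const_nhds (x := H i j))
      rw [zero_add] at this
      exact this.congr fun p => by ring
    have hχt : Tendsto χ F₂ F₁ := htf.prodMk hsnd
    calc Filter.liminf Q₁ F₁ ≤ Filter.liminf Q₁ (Filter.map χ F₂) :=
          Filter.liminf_le_liminf_of_le hχt
      _ = Filter.liminf (Q₁ ∘ χ) F₂ := liminf_map_eq _ _ _
      _ = Filter.liminf Q₂ F₂ := Filter.liminf_congr hcong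
  exact le_antisymm partB partA
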